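/- arXiv:1710.01796 — 3 statements merged into one kernel-verified Lean document; each statement's English description precedes it below -/
import Mathlib

section
/- Let V be a real Banach space, ζ : [c,d] → V Lipschitz continuous with the right derivative ζ'ᵣ(t) := lim_{h↘0} (ζ(t+h) − ζ(t))/h existing for every t ∈ [c,d), and suppose ζ'ᵣ is strongly measurable. Define ζ⋆(t) := ζ(c) + ∫_c^t ζ'ᵣ(τ) dτ (Bochner integral). Then ζ(t) = ζ⋆(t) for all t ∈ [c,d]. -/
open MeasureTheory Filter Topology

/-- A Lipschitz curve `ζ : [c,d] → V` in a Banach space, whose right derivative `ζ'ᵣ(t)`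
exists at every `t ∈ [c,d)` and is strongly measurable, is recovered from it by the
Bochner integral: `ζ(t) = ζ(c) + ∫_c^t ζ'ᵣ(τ) dτ` for all `t ∈ [c,d]`. -/
theorem stmt_3 (V : Type*) [NormedAddCommGroup V] [NormedSpace ℝ V] [CompleteSpace V]
    (c d : ℝ) (hcd : c < d) (ζ ζ' : ℝ → V) (L : NNReal)
    (hlip : LipschitzOnWith L ζ (Set.Icc c d))
    (hderiv : ∀ t ∈ Set.Ico c d,
      Tendsto (fun h : ℝ => h⁻¹ • (ζ (t + h) - ζ t)) (𝓝[>] 0) (𝓝 (ζ' t)))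
    (hmeas : StronglyMeasurable ζ') :
    ∀ t ∈ Set.Icc c d, ζ t = ζ c + ∫ τ in c..t, ζ' τ := by
  -- norm bound on the right derivative
  have hbd : ∀ s ∈ Set.Ico c d, ‖ζ' s‖ ≤ (L : ℝ) := by
    intro s hs
    have hsd : (0:ℝ) < d - s := by linarith [hs.2]
    have hev : ∀ᶠ h in 𝓝[>] (0:ℝ), ‖h⁻¹ • (ζ (s + h) - ζ s)‖ ≤ (L : ℝ) := by
      filter_upwards [Ioo_mem_nhdsGT_of_mem ⟨le_refl (0:ℝ), hsd⟩,
        self_mem_nhdsWithin] with h hh hpos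
      have hpos' : (0:ℝ) < h := hpos
      have hmem : s + h ∈ Set.Icc c d := ⟨by linarith [hs.1], by linarith [hh.2]⟩
      have hsm : s ∈ Set.Icc c d := ⟨hs.1, hs.2.le⟩
      have := hlip.norm_sub_le hmem hsm
      rw [norm_smul, norm_inv, Real.norm_eq_abs, abs_of_pos hpos']
      have hdist : ‖ζ (s + h) - ζ s‖ ≤ L * h := by
        simpa [abs_of_pos hpos'] using this
      calc h⁻¹ * ‖ζ (s + h) - ζ s‖ ≤ h⁻¹ * (L * h) := by
            exact mul_le_mul_of_nonneg_left hdist (inv_nonneg.mpr hpos'.le)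
        _ = L := by field_simp
    exact le_of_tendsto ((hderiv s hs).norm) hev
  -- right derivative statement as HasDerivWithinAt
  have hD : ∀ s ∈ Set.Ico c d, HasDerivWithinAt ζ (ζ' s) (Set.Ioi s) s := by
    intro s hs
    rw [hasDerivWithinAt_iff_tendsto_slope]
    have hset : Set.Ioi s \ {s} = Set.Ioi s :=
      Set.diff_singleton_eq_self (by simp)
    rw [hset]
    have hmap : Tendsto (fun h : ℝ => s + h) (𝓝[>] (0:ℝ)) (𝓝[>] s) := by
      have h1 : Tendsto (fun h : ℝ => s + h) (𝓝[>] (0:ℝ)) (𝓝 s) := by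
        have : Tendsto (fun h : ℝ => s + h) (𝓝 (0:ℝ)) (𝓝 s) := by
          have := ((continuous_const.add continuous_id : Continuous fun h : ℝ => s + h)).tendsto (0:ℝ)
          convert this using 2 <;> simp
        exact this.mono_left nhdsWithin_le_nhds
      apply tendsto_nhdsWithin_of_tendsto_nhds_of_eventually_within _ h1
      filter_upwards [self_mem_nhdsWithin] with h hh
      exact by simpa using hh
    have : Tendsto (fun h : ℝ => (slope ζ s) (s + h)) (𝓝[>] (0:ℝ)) (𝓝 (ζ' s)) := by
      have heq : ∀ᶠ h in 𝓝[>] (0:ℝ),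
          (slope ζ s) (s + h) = h⁻¹ • (ζ (s + h) - ζ s) := by
        filter_upwards [self_mem_nhdsWithin] with h hh
        simp [slope_def_module]
      exact Tendsto.congr' (heq.mono fun h hh => hh.symm) (hderiv s hs)
    -- now transfer along the map h ↦ s + h
    have hsurj : Tendsto (slope ζ s) (𝓝[>] s) (𝓝 (ζ' s)) := by
      have hmap' : Tendsto (fun x : ℝ => x - s) (𝓝[>] s) (𝓝[>] (0:ℝ)) := by
        have h1 : Tendsto (fun x : ℝ => x - s) (𝓝[>] s) (𝓝 (0:ℝ)) := by
          have : Tendsto (fun x : ℝ => x - s) (𝓝 s) (𝓝 (0:ℝ)) := by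
            have := ((continuous_id.sub continuous_const : Continuous fun x : ℝ => x - s)).tendsto s
            convert this using 2 <;> simp
          exact this.mono_left nhdsWithin_le_nhds
        apply tendsto_nhdsWithin_of_tendsto_nhds_of_eventually_within _ h1
        filter_upwards [self_mem_nhdsWithin] with x hx
        simpa [Set.mem_Ioi, sub_pos] using hx
      have := this.comp hmap'
      refine this.congr fun x => ?_
      simp
    exact hsurj
  intro t ht
  rcases eq_or_lt_of_le ht.1 with h | h
  · subst h; simp
  · have hle : c ≤ t := ht.1
    have key : ∫ τ in c..t, ζ' τ = ζ t - ζ c := by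
      apply intervalIntegral.integral_eq_sub_of_hasDeriv_right_of_le hle
      · exact (hlip.continuousOn).mono (Set.Icc_subset_Icc le_rfl ht.2)
      · intro x hx
        exact hD x ⟨hx.1.le, lt_of_lt_of_le hx.2 ht.2⟩
      · -- interval integrability from boundedness
        rw [intervalIntegrable_iff_integrableOn_Ioc_of_le hle]
        apply Integrable.mono' (integrable_const (L : ℝ))
          hmeas.aestronglyMeasurable.restrict
        have hnull : (volume : Measure ℝ) ({t} : Set ℝ) = 0 := measure_singleton t
        rw [ae_restrict_iff' measurableSet_Ioc]
        filter_upwards [measure_eq_zero_iff_ae_notMem.mp hnull] with x hx hxI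
        rcases lt_or_eq_of_le hxI.2 with hlt | heq
        · exact hbd x ⟨hxI.1.le, lt_of_lt_of_le hlt ht.2⟩
        · exact absurd (Set.mem_singleton_iff.mpr heq) hx
    rw [key]; abel
end

section
/- Let V be a real separable Banach space, 𝒜 : D(𝒜) → 2^V a densely defined m-accretive operator whose associated semigroup T_𝒜 is domain invariant and admits an infinitesimal generator 𝒜°. Then for every v ∈ V, the map t ↦ T_𝒜(t)v is locally Lipschitz continuous on (0,∞), differentiable almost everywhere, and its derivative satisfies T_𝒜'(t)v = −𝒜° T_𝒜(t)v for almost every t ∈ (0,∞). -/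
open MeasureTheory Filter Topology

open Set Metric

set_option maxHeartbeats 1000000 in
lemma aux_ae_hasDerivAt_integral {V : Type*} [NormedAddCommGroup V] [NormedSpace ℝ V]
    [CompleteSpace V] (g : ℝ → V) (hg : LocallyIntegrable g volume) (a : ℝ) :
    ∀ᵐ x ∂(volume : Measure ℝ), HasDerivAt (fun t => ∫ s in a..t, g s) (g x) x := by
  filter_upwards [IsUnifLocDoublingMeasure.ae_tendsto_average_norm_sub (μ := volume) hg 1]
    with x hx
  have hint : ∀ b c : ℝ, IntervalIntegrable g volume b c := fun b c =>
    (hg.integrableOn_isCompact isCompact_uIcc).intervalIntegrable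
  rw [hasDerivAt_iff_tendsto_slope]
  have key : Tendsto (fun s : ℝ => ⨍ y in closedBall ((x + s) / 2) (|s - x| / 2), ‖g y - g x‖)
      (𝓝[≠] x) (𝓝 0) := by
    apply hx (fun s => (x + s) / 2) (fun s => |s - x| / 2)
    · rw [tendsto_nhdsWithin_iff]
      constructor
      · have : Tendsto (fun s : ℝ => |s - x| / 2) (𝓝 x) (𝓝 (|x - x| / 2)) :=
          (((continuous_id.sub continuous_const).abs.div_const 2).tendsto x)
        simpa using this.mono_left nhdsWithin_le_nhds
      · filter_upwards [self_mem_nhdsWithin] with s hs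
        have : s ≠ x := hs
        have : |s - x| > 0 := abs_pos.2 (sub_ne_zero.2 this)
        exact mem_Ioi.2 (by linarith)
    · filter_upwards with s
      rw [mem_closedBall, Real.dist_eq, one_mul]
      have h1 : (x + s) / 2 - x = (s - x) / 2 := by ring
      rw [abs_sub_comm, h1, abs_div]
      simp
  rw [tendsto_iff_norm_sub_tendsto_zero]
  apply squeeze_zero' (Eventually.of_forall fun s => norm_nonneg _) _ key
  filter_upwards [self_mem_nhdsWithin] with s hs
  have hsx : s ≠ x := hs
  have habs : (0:ℝ) < |s - x| := abs_pos.2 (sub_ne_zero.2 hsx)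
  -- the ball is the interval [min x s, max x s]
  have hball : closedBall ((x + s) / 2) (|s - x| / 2) = Icc (min x s) (max x s) := by
    rw [Real.closedBall_eq_Icc]
    rcases le_total x s with h | h
    · rw [abs_of_nonneg (by linarith), min_eq_left h, max_eq_right h]
      congr 1 <;> ring
    · rw [abs_of_nonpos (by linarith), min_eq_right h, max_eq_left h]
      congr 1 <;> ring
  -- difference of primitives
  have hdiff : (∫ t in a..s, g t) - ∫ t in a..x, g t = ∫ t in x..s, g t :=
    intervalIntegral.integral_interval_sub_left (hint a s) (hint a x)
  have hslope : slope (fun t => ∫ u in a..t, g u) x s - g x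
      = (s - x)⁻¹ • ∫ t in x..s, (g t - g x) := by
    rw [slope_def_module, hdiff]
    rw [intervalIntegral.integral_sub (hint x s) (intervalIntegrable_const)]
    rw [intervalIntegral.integral_const, smul_sub, smul_smul,
      inv_mul_cancel₀ (sub_ne_zero.2 (Ne.symm hsx).symm), one_smul]
  rw [hslope, norm_smul, norm_inv, Real.norm_eq_abs]
  -- bound the integral by the integral over the ball
  have hnorm : ‖∫ t in x..s, (g t - g x)‖
      ≤ ∫ t in closedBall ((x + s) / 2) (|s - x| / 2), ‖g t - g x‖ := by
    refine le_trans (intervalIntegral.norm_integral_le_integral_norm_uIoc) ?_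
    apply setIntegral_mono_set
    · exact ((hg.integrableOn_isCompact (isCompact_closedBall _ _)).sub
        (integrableOn_const (by rw [Real.volume_closedBall]; exact ENNReal.ofReal_ne_top))).norm
    · exact Eventually.of_forall fun t => norm_nonneg _
    · refine HasSubset.Subset.eventuallyLE ?_
      rw [hball]
      exact Ioc_subset_Icc_self.trans (Icc_subset_Icc le_rfl le_rfl)
  have hvol : (volume (closedBall ((x + s) / 2) (|s - x| / 2))).toReal = |s - x| := by
    rw [Real.volume_closedBall, ENNReal.toReal_ofReal (by positivity)]
    ring
  rw [setAverage_eq, measureReal_def, hvol, smul_eq_mul]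
  exact mul_le_mul_of_nonneg_left hnorm (by positivity)


set_option maxHeartbeats 1000000 in
/-- Let `𝒜` be a densely defined m-accretive (multivalued) operator on a real separable
Banach space `V`, whose semigroup `T` is domain invariant and admits an infinitesimal
generator `A0`. Then for every `v ∈ V` the orbit `t ↦ T t v` is locally Lipschitz on
`(0,∞)` and differentiable a.e. with derivative `−A0 (T t v)`. -/
theorem stmt_4 (V : Type*) [NormedAddCommGroup V] [NormedSpace ℝ V] [CompleteSpace V]
    [TopologicalSpace.SeparableSpace V]
    (𝒜 : V → Set V)
    -- accretivity
    (hacc : ∀ α : ℝ, 0 < α → ∀ v₁ w₁ v₂ w₂ : V, w₁ ∈ 𝒜 v₁ → w₂ ∈ 𝒜 v₂ →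
      ‖v₁ - v₂‖ ≤ ‖v₁ - v₂ + α • (w₁ - w₂)‖)
    -- range condition (m-accretivity)
    (hrange : ∀ α : ℝ, 0 < α → ∀ u : V, ∃ v w, w ∈ 𝒜 v ∧ v + α • w = u)
    -- densely defined
    (hdense : Dense {v : V | (𝒜 v).Nonempty})
    (T : ℝ → V → V)
    -- contraction property of the semigroup
    (hcontr : ∀ t ≥ (0:ℝ), ∀ u w : V, ‖T t u - T t w‖ ≤ ‖u - w‖)
    -- joint continuity
    (hjoint : ContinuousOn (fun p : ℝ × V => T p.1 p.2) (Set.Ici 0 ×ˢ Set.univ))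
    -- semigroup property
    (hT0 : ∀ u, T 0 u = u)
    (hsem : ∀ s ≥ (0:ℝ), ∀ t ≥ (0:ℝ), ∀ u, T (s + t) u = T t (T s u))
    -- domain invariance
    (hdominv : ∀ t > (0:ℝ), ∀ u : V, (𝒜 (T t u)).Nonempty)
    -- infinitesimal generator
    (A0 : V → V)
    (hgen : ∀ u : V, (𝒜 u).Nonempty →
      Tendsto (fun h : ℝ => h⁻¹ • (T h u - u)) (𝓝[>] 0) (𝓝 (-(A0 u))))
    (hgenmem : ∀ u : V, (𝒜 u).Nonempty → A0 u ∈ 𝒜 u)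
    (hgen0 : ∀ u : V, ¬ (𝒜 u).Nonempty → A0 u = 0)
    -- Lipschitz property of orbits starting in the domain on bounded intervals
    (hLip : ∀ u : V, (𝒜 u).Nonempty → ∀ b > (0:ℝ), ∃ L : NNReal,
      LipschitzOnWith L (fun t => T t u) (Set.Icc 0 b)) :
    ∀ v : V,
      (∀ s r : ℝ, 0 < s → s ≤ r → ∃ L : NNReal,
        LipschitzOnWith L (fun t => T t v) (Set.Icc s r)) ∧
      (∀ᵐ t ∂(volume.restrict (Set.Ioi (0:ℝ))),
        HasDerivAt (fun s => T s v) (-(A0 (T t v))) t) := by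
  intro v
  -- continuity of the orbit
  have horb : ContinuousOn (fun t : ℝ => T t v) (Set.Ici 0) := by
    have h : ContinuousOn ((fun p : ℝ × V => T p.1 p.2) ∘ fun t : ℝ => (t, v)) (Set.Ici 0) := by
      apply hjoint.comp ((continuous_id.prodMk continuous_const).continuousOn)
      intro t ht
      exact ⟨ht, Set.mem_univ _⟩
    exact h
  have hkey : ∀ s t : ℝ, 0 ≤ s → s ≤ t → T t v = T (t - s) (T s v) := by
    intro s t hs hst
    have h := hsem s hs (t - s) (by linarith) v
    rwa [add_sub_cancel] at h
  -- Part 1 : local Lipschitz continuity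
  have part1 : ∀ s r : ℝ, 0 < s → s ≤ r → ∃ L : NNReal,
      LipschitzOnWith L (fun t => T t v) (Set.Icc s r) := by
    intro s r hs hsr
    obtain ⟨L, hL⟩ := hLip (T s v) (hdominv s hs v) (r - s + 1) (by linarith)
    refine ⟨L, LipschitzOnWith.of_dist_le_mul fun t₁ h₁ t₂ h₂ => ?_⟩
    rw [hkey s t₁ hs.le h₁.1, hkey s t₂ hs.le h₂.1]
    have e1 : t₁ - s ∈ Set.Icc (0:ℝ) (r - s + 1) := ⟨by linarith [h₁.1], by linarith [h₁.2]⟩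
    have e2 : t₂ - s ∈ Set.Icc (0:ℝ) (r - s + 1) := ⟨by linarith [h₂.1], by linarith [h₂.2]⟩
    calc dist (T (t₁ - s) (T s v)) (T (t₂ - s) (T s v)) ≤ L * dist (t₁ - s) (t₂ - s) :=
        hL.dist_le_mul _ e1 _ e2
      _ = L * dist t₁ t₂ := by
        rw [Real.dist_eq, Real.dist_eq]
        congr 1
        congr 1
        ring
  -- right-sided difference quotients converge everywhere on (0, ∞)
  have hgt : ∀ t : ℝ, 0 < t → Tendsto (fun s => (s - t)⁻¹ • (T s v - T t v)) (𝓝[>] t)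
      (𝓝 (-(A0 (T t v)))) := by
    intro t ht
    have h1 := hgen (T t v) (hdominv t ht v)
    have h2 : Tendsto (fun s : ℝ => s - t) (𝓝[>] t) (𝓝[>] (0:ℝ)) := by
      rw [tendsto_nhdsWithin_iff]
      constructor
      · have hc : Tendsto (fun s : ℝ => s - t) (𝓝 t) (𝓝 (t - t)) :=
          ((continuous_id.sub continuous_const).tendsto t)
        rw [sub_self] at hc
        exact hc.mono_left nhdsWithin_le_nhds
      · filter_upwards [self_mem_nhdsWithin] with s hs
        exact sub_pos.2 (Set.mem_Ioi.1 hs)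
    refine (h1.comp h2).congr' ?_
    filter_upwards [self_mem_nhdsWithin] with s hs
    simp only [Function.comp_apply]
    rw [← hkey t s ht.le (le_of_lt hs)]
  have hright : ∀ t : ℝ, 0 < t →
      HasDerivWithinAt (fun s => T s v) (-(A0 (T t v))) (Set.Ioi t) t := by
    intro t ht
    rw [hasDerivWithinAt_iff_tendsto_slope]
    have hd : Set.Ioi t \ {t} = Set.Ioi t := Set.diff_singleton_eq_self (by simp)
    rw [hd]
    exact (hgt t ht).congr fun s => (slope_def_module _ _ _).symm
  -- norm bound for the generator along the orbit
  have hbound : ∀ (L : NNReal) (c d : ℝ), 0 < c →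
      LipschitzOnWith L (fun τ => T τ v) (Set.Icc c d) →
      ∀ t, c ≤ t → t < d → ‖A0 (T t v)‖ ≤ L := by
    intro L c d hc hL t hct htd
    have ht : 0 < t := lt_of_lt_of_le hc hct
    have hn := (hgt t ht).norm
    rw [norm_neg] at hn
    apply le_of_tendsto hn
    filter_upwards [Ioc_mem_nhdsGT_of_mem ⟨le_refl t, htd⟩] with s hs
    have hst : t < s := hs.1
    have habs : |s - t| ≠ 0 := ne_of_gt (abs_pos.2 (sub_ne_zero.2 (ne_of_gt hst)))
    rw [norm_smul, norm_inv, Real.norm_eq_abs]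
    have hd : ‖T s v - T t v‖ ≤ L * |s - t| := by
      have h := hL.dist_le_mul s ⟨hct.trans hst.le, hs.2⟩ t ⟨hct, htd.le⟩
      rwa [dist_eq_norm, Real.dist_eq] at h
    calc |s - t|⁻¹ * ‖T s v - T t v‖ ≤ |s - t|⁻¹ * (L * |s - t|) :=
        mul_le_mul_of_nonneg_left hd (by positivity)
      _ = L := by
        rw [mul_comm ((L:ℝ)) _, ← mul_assoc, inv_mul_cancel₀ habs, one_mul]
  -- strong measurability
  have horbmax : Continuous fun t : ℝ => T (max t 0) v :=
    horb.comp_continuous (continuous_id.max continuous_const) fun x => Set.mem_Ici.2 (le_max_right _ _)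
  have hSM0 : StronglyMeasurable (Set.indicator (Set.Ioi (0:ℝ)) fun t => -(A0 (T t v))) := by
    apply stronglyMeasurable_of_tendsto (u := (atTop : Filter ℕ))
      (f := fun (n : ℕ) => Set.indicator (Set.Ioi (0:ℝ)) fun t' =>
        (((n:ℝ)+1)⁻¹)⁻¹ • (T (max (t' + ((n:ℝ)+1)⁻¹) 0) v - T (max t' 0) v))
    · intro n
      apply Continuous.stronglyMeasurable ?_ |>.indicator measurableSet_Ioi
      exact (((horbmax.comp (continuous_id.add continuous_const)).sub horbmax).const_smul _)
    · rw [tendsto_pi_nhds]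
      intro t
      by_cases ht : t ∈ Set.Ioi (0:ℝ)
      · simp only [Set.indicator_of_mem ht]
        have hseq : Tendsto (fun n : ℕ => t + ((n:ℝ)+1)⁻¹) atTop (𝓝[>] t) := by
          rw [tendsto_nhdsWithin_iff]
          constructor
          · have h0 : Tendsto (fun n : ℕ => ((n:ℝ)+1)⁻¹) atTop (𝓝 0) := by
              simpa [one_div] using tendsto_one_div_add_atTop_nhds_zero_nat (𝕜 := ℝ)
            simpa using (tendsto_const_nhds.add h0)
          · filter_upwards with n
            exact Set.mem_Ioi.2 (lt_add_of_pos_right t (by positivity))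
        refine ((hgt t ht).comp hseq).congr fun n => ?_
        simp only [Function.comp_apply, add_sub_cancel_left]
        rw [max_eq_left (by have h := Set.mem_Ioi.1 ht; positivity), max_eq_left (le_of_lt ht)]
      · simp only [Set.indicator_of_notMem ht]
        exact tendsto_const_nhds
  have hSMa : ∀ a : ℝ, 0 < a →
      StronglyMeasurable (Set.indicator (Set.Ioi a) fun t => -(A0 (T t v))) := by
    intro a ha
    have he : (Set.indicator (Set.Ioi a) fun t => -(A0 (T t v)))
        = Set.indicator (Set.Ioi a)
          (Set.indicator (Set.Ioi (0:ℝ)) fun t => -(A0 (T t v))) := by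
      funext t
      by_cases hta : t ∈ Set.Ioi a
      · rw [Set.indicator_of_mem hta, Set.indicator_of_mem hta,
          Set.indicator_of_mem (Set.Ioi_subset_Ioi ha.le hta)]
      · rw [Set.indicator_of_notMem hta, Set.indicator_of_notMem hta]
    rw [he]
    exact hSM0.indicator measurableSet_Ioi
  -- local integrability
  have hloc : ∀ a : ℝ, 0 < a → LocallyIntegrable
      (Set.indicator (Set.Ioi a) fun t => -(A0 (T t v))) volume := by
    intro a ha
    rw [locallyIntegrable_iff]
    intro K hK
    obtain ⟨R, hR⟩ := hK.isBounded.subset_closedBall 0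
    obtain ⟨L, hL⟩ := part1 a (max R a + 1) ha (by linarith [le_max_right R a])
    apply Measure.integrableOn_of_bounded (M := L) hK.measure_lt_top.ne
      ((hSMa a ha).aestronglyMeasurable)
    filter_upwards [ae_restrict_mem hK.measurableSet] with t htK
    by_cases hta : t ∈ Set.Ioi a
    · rw [Set.indicator_of_mem hta, norm_neg]
      apply hbound L a (max R a + 1) ha hL t (le_of_lt hta)
      have h1 : |t| ≤ R := by
        have h2 := hR htK
        rwa [Metric.mem_closedBall, Real.dist_eq, sub_zero] at h2
      have h3 : t ≤ R := le_trans (le_abs_self t) h1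
      linarith [le_max_left R a]
    · rw [Set.indicator_of_notMem hta, norm_zero]
      exact L.coe_nonneg
  -- fundamental theorem of calculus
  have hFTC : ∀ a : ℝ, 0 < a → ∀ t, a ≤ t →
      T t v = T a v + ∫ s in a..t, Set.indicator (Set.Ioi a) (fun t' => -(A0 (T t' v))) s := by
    intro a ha t hat
    have h := intervalIntegral.integral_eq_sub_of_hasDeriv_right_of_le hat
      (f := fun τ => T τ v) (f' := Set.indicator (Set.Ioi a) fun t' => -(A0 (T t' v)))
      (horb.mono fun x hx => le_trans ha.le hx.1) ?_ ?_
    · rw [h]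
      abel
    · intro x hx
      rw [Set.indicator_of_mem (Set.mem_Ioi.2 hx.1)]
      exact hright x (ha.trans hx.1)
    · exact ((hloc a ha).integrableOn_isCompact isCompact_uIcc).intervalIntegrable
  -- a.e. differentiability on (a, ∞)
  have main_a : ∀ a : ℝ, 0 < a → ∀ᵐ t ∂(volume.restrict (Set.Ioi a)),
      HasDerivAt (fun s => T s v) (-(A0 (T t v))) t := by
    intro a ha
    have hLeb := aux_ae_hasDerivAt_integral _ (hloc a ha) a
    filter_upwards [ae_restrict_of_ae hLeb, ae_restrict_mem measurableSet_Ioi] with x hx hxa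
    have h1 : HasDerivAt
        (fun t => T a v + ∫ s in a..t, Set.indicator (Set.Ioi a) (fun t' => -(A0 (T t' v))) s)
        (Set.indicator (Set.Ioi a) (fun t' => -(A0 (T t' v))) x) x := hx.const_add _
    rw [Set.indicator_of_mem hxa] at h1
    apply h1.congr_of_eventuallyEq
    filter_upwards [Ioi_mem_nhds hxa] with t ht
    exact hFTC a ha t (le_of_lt ht)
  refine ⟨part1, ?_⟩
  have hunion : Set.Ioi (0:ℝ) = ⋃ n : ℕ, Set.Ioi (((n:ℝ)+1)⁻¹) := by
    ext x
    simp only [Set.mem_iUnion, Set.mem_Ioi]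
    constructor
    · intro hx
      obtain ⟨n, hn⟩ := exists_nat_one_div_lt hx
      exact ⟨n, by rwa [one_div] at hn⟩
    · rintro ⟨n, hn⟩
      exact lt_trans (by positivity) hn
  rw [hunion, ae_restrict_iUnion_iff]
  intro n
  exact main_a _ (by positivity)
end

section
/- In the setting of the piecewise semigroup construction: with 𝕏(t) := T(t−αₘ)Xₘ and 𝕐(t) := T(t−αₘ)Yₘ for t ∈ [αₘ, αₘ₊₁), where (Xₘ) and (Yₘ) are generated by (x,(ηₖ)) and (y,(ζₖ)), one has for all t ≥ 0: ‖𝕏(t) − 𝕐(t)‖ ≤ ‖x − y‖ + Σ_{k: αₖ ≤ t} ‖ηₖ − ζₖ‖. In particular the map (x, (ηₖ)) ↦ 𝕏 is Lipschitz with constant 1 in this sense. -/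
open Filter Topology

/-- For the piecewise semigroup processes `𝕏, 𝕐` generated by `(x,(ηₖ))` and `(y,(ζₖ))`
under a contraction semigroup `T`, one has for every `t ≥ 0`:
`‖𝕏(t) − 𝕐(t)‖ ≤ ‖x − y‖ + Σ_{k : αₖ ≤ t} ‖ηₖ − ζₖ‖`, the sum being finite. -/
theorem stmt_12 (V : Type*) [NormedAddCommGroup V]
    (T : ℝ → V → V)
    (hcontr : ∀ t ≥ (0:ℝ), ∀ u w : V, ‖T t u - T t w‖ ≤ ‖u - w‖)
    (hT0 : ∀ u, T 0 u = u)
    (hsem : ∀ s ≥ (0:ℝ), ∀ t ≥ (0:ℝ), ∀ u, T (s + t) u = T t (T s u))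
    (α : ℕ → ℝ) (hα0 : α 0 = 0) (hmono : StrictMono α)
    (htop : Tendsto α atTop atTop)
    (x y : V) (η ζ : ℕ → V) (X Y : ℕ → V)
    (hX0 : X 0 = x) (hY0 : Y 0 = y)
    (hX : ∀ m : ℕ, X (m+1) = T (α (m+1) - α m) (X m) + η (m+1))
    (hY : ∀ m : ℕ, Y (m+1) = T (α (m+1) - α m) (Y m) + ζ (m+1))
    (𝕏 𝕐 : ℝ → V)
    (h𝕏 : ∀ m : ℕ, ∀ t ∈ Set.Ico (α m) (α (m+1)), 𝕏 t = T (t - α m) (X m))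
    (h𝕐 : ∀ m : ℕ, ∀ t ∈ Set.Ico (α m) (α (m+1)), 𝕐 t = T (t - α m) (Y m)) :
    ∀ t ≥ (0:ℝ), ∃ F : Finset ℕ, (∀ k : ℕ, k ∈ F ↔ 1 ≤ k ∧ α k ≤ t) ∧
      ‖𝕏 t - 𝕐 t‖ ≤ ‖x - y‖ + ∑ k ∈ F, ‖η k - ζ k‖ := by
  -- discrete bound
  have hdisc : ∀ m : ℕ, ‖X m - Y m‖ ≤ ‖x - y‖ + ∑ k ∈ Finset.Icc 1 m, ‖η k - ζ k‖ := by
    intro m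
    induction m with
    | zero => simp [hX0, hY0]
    | succ m ih =>
      have hd : α (m+1) - α m ≥ 0 := by
        have := hmono (Nat.lt_succ_self m); linarith
      have h1 : X (m+1) - Y (m+1)
          = (T (α (m+1) - α m) (X m) - T (α (m+1) - α m) (Y m)) + (η (m+1) - ζ (m+1)) := by
        rw [hX m, hY m]; abel
      calc ‖X (m+1) - Y (m+1)‖
          ≤ ‖T (α (m+1) - α m) (X m) - T (α (m+1) - α m) (Y m)‖ + ‖η (m+1) - ζ (m+1)‖ := by
            rw [h1]; exact norm_add_le _ _
        _ ≤ ‖X m - Y m‖ + ‖η (m+1) - ζ (m+1)‖ := by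
            gcongr; exact hcontr _ hd _ _
        _ ≤ (‖x - y‖ + ∑ k ∈ Finset.Icc 1 m, ‖η k - ζ k‖) + ‖η (m+1) - ζ (m+1)‖ := by
            gcongr
        _ = ‖x - y‖ + ∑ k ∈ Finset.Icc 1 (m+1), ‖η k - ζ k‖ := by
            rw [Finset.sum_Icc_succ_top (by omega : 1 ≤ m+1)]; ring
  intro t ht
  -- find m with α m ≤ t < α (m+1)
  obtain ⟨N, hN⟩ : ∃ N, t < α N := by
    obtain ⟨N, hN⟩ := (htop.eventually_gt_atTop t).exists
    exact ⟨N, hN⟩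
  have hex : ∃ N, t < α N := ⟨N, hN⟩
  have hMlt : t < α (Nat.find hex) := Nat.find_spec hex
  have hMpos : 0 < Nat.find hex := by
    rcases Nat.eq_zero_or_pos (Nat.find hex) with h | h
    · exfalso; rw [h, hα0] at hMlt; linarith
    · exact h
  obtain ⟨m, hm⟩ : ∃ m, Nat.find hex = m + 1 := ⟨Nat.find hex - 1, by omega⟩
  rw [hm] at hMlt
  have hle : α m ≤ t := by
    by_contra h
    exact absurd (Nat.find_min hex (by omega : m < Nat.find hex)) (by push_neg; linarith)
  have hmem : t ∈ Set.Ico (α m) (α (m+1)) := ⟨hle, hMlt⟩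
  refine ⟨Finset.Icc 1 m, ?_, ?_⟩
  · intro k
    simp only [Finset.mem_Icc]
    constructor
    · rintro ⟨h1, h2⟩
      exact ⟨h1, le_trans (hmono.monotone h2) hle⟩
    · rintro ⟨h1, h2⟩
      refine ⟨h1, ?_⟩
      by_contra h
      have : m + 1 ≤ k := by omega
      have := hmono.monotone this
      linarith
  · rw [h𝕏 m t hmem, h𝕐 m t hmem]
    calc ‖T (t - α m) (X m) - T (t - α m) (Y m)‖
        ≤ ‖X m - Y m‖ := hcontr _ (by linarith) _ _
      _ ≤ _ := hdisc m
end
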